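/- Let 𝒜 be an a.d.-family and κ an uncountable cardinal. The following are equivalent: (1) ℙ_𝒜 admits an antichain of cardinality κ; (2) the unit sphere of (X_𝒜, ‖·‖∞) admits a 2-equilateral set of cardinality κ; (3) the unit sphere of (X_𝒜, ‖·‖∞) admits an r-equilateral set of cardinality κ for some r > 1; (4) the unit sphere of (X_𝒜, ‖·‖∞) admits a (1+ε)-separated set of cardinality κ for some ε > 0. -/

import Mathlib

open Set Filter Cardinal

noncomputable section

/-- The Banach space `ℓ∞` of bounded real sequences with the sup norm. -/
abbrev Linfty : Type := lp (fun _ : ℕ => ℝ) ⊤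

/-- An a.d.-family: an uncountable family of infinite subsets of `ℕ` which is
pairwise almost disjoint. -/
def ADFamily (𝒜 : Set (Set ℕ)) : Prop :=
  ¬𝒜.Countable ∧ (∀ A ∈ 𝒜, A.Infinite) ∧
    ∀ A ∈ 𝒜, ∀ B ∈ 𝒜, A ≠ B → (A ∩ B).Finite

/-- A maximal a.d.-family. -/
def MaximalADFamily (𝒜 : Set (Set ℕ)) : Prop :=
  ADFamily 𝒜 ∧ ∀ X : Set ℕ, X.Infinite → ∃ A ∈ 𝒜, (X ∩ A).Infinite

/-- `A =* B` : the symmetric difference is finite. -/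
def eqStar (A B : Set ℕ) : Prop := (symmDiff A B).Finite

/-- Finite subfamilies `a`, `b` of `𝒜` represent the pair `p`. -/
def Represents (𝒜 : Set (Set ℕ)) (p : Set ℕ × Set ℕ) (a b : Finset (Set ℕ)) : Prop :=
  ↑a ⊆ 𝒜 ∧ ↑b ⊆ 𝒜 ∧ eqStar p.1 (⋃ A ∈ a, A) ∧ eqStar p.2 (⋃ B ∈ b, B)

/-- `p` is a condition of the splitting partial order `ℙ_𝒜`. -/
def SplitCond (𝒜 : Set (Set ℕ)) (p : Set ℕ × Set ℕ) : Prop :=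
  p.1 ∩ p.2 = ∅ ∧ ∃ a b : Finset (Set ℕ), Represents 𝒜 p a b

/-- `Extends p q` means `p ≤ q` in `ℙ_𝒜`. -/
def Extends (p q : Set ℕ × Set ℕ) : Prop := q.1 ⊆ p.1 ∧ q.2 ⊆ p.2

/-- Compatibility in `ℙ_𝒜`. -/
def Compat (𝒜 : Set (Set ℕ)) (p q : Set ℕ × Set ℕ) : Prop :=
  ∃ r, SplitCond 𝒜 r ∧ Extends r p ∧ Extends r q

/-- An antichain of `ℙ_𝒜`: a set of pairwise incompatible conditions. -/
def SplitAntichain (𝒜 : Set (Set ℕ)) (P : Set (Set ℕ × Set ℕ)) : Prop :=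
  (∀ p ∈ P, SplitCond 𝒜 p) ∧ ∀ p ∈ P, ∀ q ∈ P, p ≠ q → ¬Compat 𝒜 p q

/-- `ℙ_𝒜` satisfies the countable chain condition. -/
def SplitCCC (𝒜 : Set (Set ℕ)) : Prop :=
  ∀ P : Set (Set ℕ × Set ℕ), SplitAntichain 𝒜 P → P.Countable

/-- A centered subset of `ℙ_𝒜`: every finite subset has a common lower bound in `ℙ_𝒜`. -/
def SplitCentered (𝒜 : Set (Set ℕ)) (P : Set (Set ℕ × Set ℕ)) : Prop :=
  ∀ F : Finset (Set ℕ × Set ℕ), ↑F ⊆ P →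
    ∃ r, SplitCond 𝒜 r ∧ ∀ p ∈ F, Extends r p

/-- `ℙ_𝒜` is σ-centered. -/
def SplitSigmaCentered (𝒜 : Set (Set ℕ)) : Prop :=
  ∃ P : ℕ → Set (Set ℕ × Set ℕ),
    (⋃ n, P n) = {p | SplitCond 𝒜 p} ∧ ∀ n, SplitCentered 𝒜 (P n)

/-- `ℙ_𝒜` has precaliber `κ`. -/
def SplitPrecaliber (𝒜 : Set (Set ℕ)) (κ : Cardinal) : Prop :=
  ∀ P : Set (Set ℕ × Set ℕ), (∀ p ∈ P, SplitCond 𝒜 p) → #P = κ →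
    ∃ Q ⊆ P, #Q = κ ∧ SplitCentered 𝒜 Q

/-- Two conditions are essentially distinct if their (uniquely determined)
representing finite subfamilies differ on both coordinates. -/
def EssDistinct (𝒜 : Set (Set ℕ)) (p q : Set ℕ × Set ℕ) : Prop :=
  ∀ ap bp aq bq : Finset (Set ℕ), Represents 𝒜 p ap bp → Represents 𝒜 q aq bq →
    ap ≠ aq ∧ bp ≠ bq

/-- An antiramsey a.d.-family. -/
def Antiramsey (𝒜 : Set (Set ℕ)) : Prop :=
  ADFamily 𝒜 ∧
  ∀ P : Set (Set ℕ × Set ℕ), (∀ p ∈ P, SplitCond 𝒜 p) → ¬P.Countable →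
    (∀ p ∈ P, ∀ q ∈ P, p ≠ q → EssDistinct 𝒜 p q) →
    (∃ p ∈ P, ∃ q ∈ P, p ≠ q ∧ Compat 𝒜 p q) ∧ (∃ p ∈ P, ∃ q ∈ P, ¬Compat 𝒜 p q)

/-- The first uncountable ordinal. -/
def omega1 : Ordinal.{0} := (Cardinal.aleph 1).ord

/-- A Luzin family. -/
def IsLuzinFamily (𝒜 : Set (Set ℕ)) : Prop :=
  ADFamily 𝒜 ∧ ∃ A : Ordinal.{0} → Set ℕ,
    (∀ ξ < omega1, A ξ ∈ 𝒜) ∧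
    (∀ B ∈ 𝒜, ∃ ξ < omega1, A ξ = B) ∧
    (∀ ξ < omega1, ∀ η < omega1, ξ ≠ η → A ξ ≠ A η) ∧
    ∀ η < omega1, ∀ m : ℕ, {ξ : Ordinal | ξ < η ∧ sSup (A ξ ∩ A η) = m}.Finite

/-- `(B i : i < n)` forms an `n`-Luzin gap. -/
def IsNLuzinGap (n : ℕ) (B : Fin n → Ordinal.{0} → Set ℕ) : Prop :=
  (∀ i : Fin n, ∀ α < omega1, ∀ β < omega1, α ≠ β → B i α ≠ B i β) ∧
  (∀ i j : Fin n, i ≠ j → ∀ α < omega1, ∀ β < omega1, B i α ≠ B j β) ∧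
  ∃ m : ℕ,
    (∀ i j : Fin n, i < j → ∀ α < omega1, B i α ∩ B j α ⊆ Set.Iio m) ∧
    (∀ α < omega1, ∀ β < omega1, α ≠ β →
      ¬(⋃ (i : Fin n) (j : Fin n) (_ : i ≠ j), B i α ∩ B j β) ⊆ Set.Iio m)

/-- `𝒜` contains an `n`-Luzin gap. -/
def ContainsNLuzinGap (𝒜 : Set (Set ℕ)) (n : ℕ) : Prop :=
  ∃ B : Fin n → Ordinal.{0} → Set ℕ,
    (∀ i : Fin n, ∀ α < omega1, B i α ∈ 𝒜) ∧ IsNLuzinGap n B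

-- The characteristic function of `A ⊆ ℕ` as an element of `ℓ∞`.
open Classical in
def indicatorLinfty (A : Set ℕ) : Linfty :=
  ⟨fun n => if n ∈ A then (1 : ℝ) else 0, by
    apply memℓp_infty
    refine ⟨1, ?_⟩
    rintro x ⟨n, rfl⟩
    dsimp only
    split <;> simp⟩

/-- The subset `c₀` of `ℓ∞`. -/
def c0Set : Set Linfty := {f | Tendsto (fun n => f n) atTop (nhds 0)}

/-- The Johnson–Lindenstrauss space `X_𝒜`: the closed linear span of
`c₀ ∪ {1_A : A ∈ 𝒜}` in `ℓ∞`, as a (closed) submodule. -/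
def XA (𝒜 : Set (Set ℕ)) : Submodule ℝ Linfty :=
  (Submodule.span ℝ (c0Set ∪ indicatorLinfty '' 𝒜)).topologicalClosure

/-- The norm `‖·‖_{∞,2}` on `ℓ∞`. -/
def norm12 (f : Linfty) : ℝ :=
  ‖f‖ + Real.sqrt (∑' n : ℕ, (f n) ^ 2 / 2 ^ (n + 1))

/-- The unit sphere of `(X_𝒜, ‖·‖∞)`. -/
def sphereInf (𝒜 : Set (Set ℕ)) : Set Linfty :=
  {f : Linfty | f ∈ XA 𝒜 ∧ ‖f‖ = 1}

/-- The unit sphere of `(X_𝒜, ‖·‖_{∞,2})`. -/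
def sphere12 (𝒜 : Set (Set ℕ)) : Set Linfty :=
  {f : Linfty | f ∈ XA 𝒜 ∧ norm12 f = 1}

/-- The Open Coloring Axiom. -/
def OCA : Prop :=
  ∀ (X : Type) [MetricSpace X], TopologicalSpace.SeparableSpace X →
    ∀ K : Set (X × X), IsOpen K → (∀ x y : X, (x, y) ∈ K → (y, x) ∈ K) →
      (∃ Y : Set X, ¬Y.Countable ∧ ∀ x ∈ Y, ∀ y ∈ Y, x ≠ y → (x, y) ∈ K) ∨
      (∃ C : ℕ → Set X, (⋃ n, C n) = Set.univ ∧
        ∀ n, ∀ x ∈ C n, ∀ y ∈ C n, x ≠ y → (x, y) ∉ K)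

/-- An `ℝ`-embeddable a.d.-family. -/
def REmbeddable (𝒜 : Set (Set ℕ)) : Prop :=
  ∃ (f : ℕ → ℚ) (r : Set ℕ → ℝ), Function.Injective f ∧
    (∀ A ∈ 𝒜, Irrational (r A) ∧
      ∀ ε : ℝ, 0 < ε → {n ∈ A | ε ≤ |(f n : ℝ) - r A|}.Finite) ∧
    (∀ A ∈ 𝒜, ∀ B ∈ 𝒜, A ≠ B → r A ≠ r B)

/-- The Continuum Hypothesis. -/
def CH : Prop := (Cardinal.continuum : Cardinal.{0}) = Cardinal.aleph 1

end


noncomputable section S14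
open Classical
set_option maxHeartbeats 1000000
set_option synthInstance.maxHeartbeats 400000

lemma ind_apply (A : Set ℕ) (n : ℕ) : indicatorLinfty A n = if n ∈ A then (1:ℝ) else 0 := rfl

abbrev spanXA (𝒜 : Set (Set ℕ)) : Submodule ℝ Linfty :=
  Submodule.span ℝ (c0Set ∪ indicatorLinfty '' 𝒜)

lemma mem_c0_iff (f : Linfty) : f ∈ c0Set ↔ Tendsto (fun n => f n) atTop (nhds 0) := Iff.rfl

def c0Sub : Submodule ℝ Linfty where
  carrier := c0Set
  add_mem' := by
    intro a b ha hb
    have : Tendsto (fun n => a n + b n) atTop (nhds (0 + 0)) := ha.add hb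
    simpa [mem_c0_iff, lp.coeFn_add, Pi.add_apply] using this
  zero_mem' := by
    have : Tendsto (fun _ : ℕ => (0:ℝ)) atTop (nhds 0) := tendsto_const_nhds
    simpa [mem_c0_iff, lp.coeFn_zero] using this
  smul_mem' := by
    intro c f hf
    have : Tendsto (fun n => c * f n) atTop (nhds (c * 0)) := tendsto_const_nhds.mul hf
    simpa [mem_c0_iff, lp.coeFn_smul, Pi.smul_apply] using this

lemma mem_c0_of_finite {f : Linfty} (h : {n | f n ≠ 0}.Finite) : f ∈ c0Set := by
  rw [mem_c0_iff]
  have h1 : ∀ᶠ n in atTop, f n = 0 := by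
    rw [← Nat.cofinite_eq_atTop]
    simpa using h.eventually_cofinite_notMem
  exact tendsto_const_nhds.congr' (h1.mono fun n hn => hn.symm)

lemma abs_apply_le_norm (f : Linfty) (n : ℕ) : |f n| ≤ ‖f‖ := by
  simpa [Real.norm_eq_abs] using lp.norm_apply_le_norm ENNReal.top_ne_zero f n

lemma norm_le_of_forall_abs {f : Linfty} {C : ℝ} (hC : 0 ≤ C) (h : ∀ n, |f n| ≤ C) : ‖f‖ ≤ C :=
  lp.norm_le_of_forall_le hC (by simpa [Real.norm_eq_abs] using h)

lemma ind_union (A B : Set ℕ) :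
    indicatorLinfty (A ∪ B) = indicatorLinfty A + indicatorLinfty B - indicatorLinfty (A ∩ B) := by
  apply lp.ext
  funext n
  have h1 : (indicatorLinfty A + indicatorLinfty B - indicatorLinfty (A ∩ B)) n
      = indicatorLinfty A n + indicatorLinfty B n - indicatorLinfty (A ∩ B) n := by
    rw [lp.coeFn_sub, lp.coeFn_add]; rfl
  rw [h1, ind_apply, ind_apply, ind_apply, ind_apply]
  by_cases hA : n ∈ A <;> by_cases hB : n ∈ B <;> simp [hA, hB]

lemma ind_empty : indicatorLinfty (∅ : Set ℕ) = 0 := by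
  apply lp.ext; funext n
  rw [ind_apply]; simp [lp.coeFn_zero]

lemma ind_mem_c0_of_finite {A : Set ℕ} (h : A.Finite) : indicatorLinfty A ∈ c0Set := by
  apply mem_c0_of_finite
  apply h.subset
  intro n hn
  simp only [mem_setOf_eq, ind_apply] at hn
  by_contra hA; simp [hA] at hn

lemma c0_mem_span (𝒜 : Set (Set ℕ)) {f : Linfty} (hf : f ∈ c0Set) : f ∈ spanXA 𝒜 :=
  Submodule.subset_span (Or.inl hf)

lemma ind_biUnion_mem_span {𝒜 : Set (Set ℕ)} (h𝒜 : ADFamily 𝒜) (a : Finset (Set ℕ))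
    (ha : ↑a ⊆ 𝒜) : indicatorLinfty (⋃ A ∈ a, A) ∈ spanXA 𝒜 := by
  classical
  induction a using Finset.induction_on with
  | empty => simpa [ind_empty] using (spanXA 𝒜).zero_mem
  | @insert A s hAs ih =>
    have haA : A ∈ 𝒜 := ha (by simp)
    have has : ↑s ⊆ 𝒜 := fun B hB => ha (by simp [hB])
    have hU : (⋃ B ∈ insert A s, B) = A ∪ ⋃ B ∈ s, B := by
      simp [Set.iUnion_iUnion_eq_or_left]
    have hfin : (A ∩ ⋃ B ∈ s, B).Finite := by
      rw [Set.inter_iUnion₂]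
      apply Set.Finite.biUnion s.finite_toSet
      intro B hB
      exact h𝒜.2.2 A haA B (has hB) (fun hEq => hAs (hEq ▸ hB))
    rw [hU, ind_union]
    exact Submodule.sub_mem _
      (Submodule.add_mem _ (Submodule.subset_span (Or.inr ⟨A, haA, rfl⟩)) (ih has))
      (c0_mem_span 𝒜 (ind_mem_c0_of_finite hfin))

lemma span_le_XA (𝒜 : Set (Set ℕ)) : spanXA 𝒜 ≤ XA 𝒜 :=
  Submodule.le_topologicalClosure _

lemma ind_mem_XA {𝒜 : Set (Set ℕ)} (h𝒜 : ADFamily 𝒜) {A : Set ℕ} (a : Finset (Set ℕ))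
    (ha : ↑a ⊆ 𝒜) (hA : eqStar A (⋃ B ∈ a, B)) : indicatorLinfty A ∈ XA 𝒜 := by
  have key : indicatorLinfty A = (indicatorLinfty A - indicatorLinfty (⋃ B ∈ a, B))
      + indicatorLinfty (⋃ B ∈ a, B) := by ring
  rw [key]
  apply Submodule.add_mem
  · apply span_le_XA 𝒜
    apply c0_mem_span 𝒜
    apply mem_c0_of_finite
    apply hA.subset
    intro n hn
    simp only [mem_setOf_eq, lp.coeFn_sub, Pi.sub_apply, ind_apply] at hn
    simp only [symmDiff_def, Set.sup_eq_union, Set.mem_union, Set.mem_diff]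
    by_cases h1 : n ∈ A <;> by_cases h2 : n ∈ ⋃ B ∈ a, B <;> simp [h1, h2] at hn ⊢
  · exact span_le_XA 𝒜 (ind_biUnion_mem_span h𝒜 a ha)

def condVec (p : Set ℕ × Set ℕ) : Linfty := indicatorLinfty p.1 - indicatorLinfty p.2

lemma condVec_apply (p : Set ℕ × Set ℕ) (n : ℕ) :
    condVec p n = (if n ∈ p.1 then (1:ℝ) else 0) - (if n ∈ p.2 then (1:ℝ) else 0) := by
  simp only [condVec, lp.coeFn_sub, Pi.sub_apply, ind_apply]

lemma condVec_abs_le (p : Set ℕ × Set ℕ) (n : ℕ) : |condVec p n| ≤ 1 := by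
  rw [condVec_apply]
  by_cases h1 : n ∈ p.1 <;> by_cases h2 : n ∈ p.2 <;> simp [h1, h2]

lemma condVec_mem_XA {𝒜 : Set (Set ℕ)} (h𝒜 : ADFamily 𝒜) {p : Set ℕ × Set ℕ}
    (hp : SplitCond 𝒜 p) : condVec p ∈ XA 𝒜 := by
  obtain ⟨-, a, b, ha, hb, h1, h2⟩ := hp
  exact Submodule.sub_mem _ (ind_mem_XA h𝒜 a ha h1) (ind_mem_XA h𝒜 b hb h2)

lemma condVec_norm_one {p : Set ℕ × Set ℕ} (hd : p.1 ∩ p.2 = ∅)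
    (hne : (p.1 ∪ p.2).Nonempty) : ‖condVec p‖ = 1 := by
  obtain ⟨n, hn⟩ := hne
  have h1 : |condVec p n| = 1 := by
    rcases hn with hn | hn
    · have h2 : n ∉ p.2 := fun h => (Set.eq_empty_iff_forall_notMem.1 hd n) ⟨hn, h⟩
      simp [condVec_apply, hn, h2]
    · have h2 : n ∉ p.1 := fun h => (Set.eq_empty_iff_forall_notMem.1 hd n) ⟨h, hn⟩
      simp [condVec_apply, hn, h2]
  refine le_antisymm (norm_le_of_forall_abs zero_le_one (condVec_abs_le p)) ?_
  calc (1:ℝ) = |condVec p n| := h1.symm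
  _ ≤ ‖condVec p‖ := abs_apply_le_norm _ n

/-- If the unions are disjoint, two conditions are compatible. -/
lemma compat_of_no_witness {𝒜 : Set (Set ℕ)} {p q : Set ℕ × Set ℕ}
    (hp : SplitCond 𝒜 p) (hq : SplitCond 𝒜 q)
    (h : ∀ n, ¬((n ∈ p.1 ∧ n ∈ q.2) ∨ (n ∈ q.1 ∧ n ∈ p.2))) : Compat 𝒜 p q := by
  obtain ⟨hdp, ap, bp, hap, hbp, h1p, h2p⟩ := hp
  obtain ⟨hdq, aq, bq, haq, hbq, h1q, h2q⟩ := hq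
  refine ⟨(p.1 ∪ q.1, p.2 ∪ q.2), ⟨?_, ap ∪ aq, bp ∪ bq, ?_⟩,
    ⟨Set.subset_union_left, Set.subset_union_left⟩,
    ⟨Set.subset_union_right, Set.subset_union_right⟩⟩
  · ext n
    simp only [Set.mem_inter_iff, Set.mem_union, Set.mem_empty_iff_false, iff_false]
    rintro ⟨h1 | h1, h2 | h2⟩
    · exact (Set.eq_empty_iff_forall_notMem.1 hdp n) ⟨h1, h2⟩
    · exact h n (Or.inl ⟨h1, h2⟩)
    · exact h n (Or.inr ⟨h1, h2⟩)
    · exact (Set.eq_empty_iff_forall_notMem.1 hdq n) ⟨h1, h2⟩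
  · have key : ∀ (A B : Set ℕ) (u v : Finset (Set ℕ)), eqStar A (⋃ C ∈ u, C) →
        eqStar B (⋃ C ∈ v, C) → eqStar (A ∪ B) (⋃ C ∈ u ∪ v, C) := by
      intro A B u v hA hB
      rw [Finset.set_biUnion_union]
      apply Set.Finite.subset (hA.union hB)
      intro n hn
      simp only [symmDiff_def, Set.sup_eq_union, Set.mem_union, Set.mem_diff] at hn ⊢
      tauto
    exact ⟨by rw [Finset.coe_union]; exact Set.union_subset hap haq,
      by rw [Finset.coe_union]; exact Set.union_subset hbp hbq,
      key _ _ _ _ h1p h1q, key _ _ _ _ h2p h2q⟩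

lemma witness_of_incompat {𝒜 : Set (Set ℕ)} {p q : Set ℕ × Set ℕ}
    (hp : SplitCond 𝒜 p) (hq : SplitCond 𝒜 q) (h : ¬Compat 𝒜 p q) :
    ∃ n, (n ∈ p.1 ∧ n ∈ q.2) ∨ (n ∈ q.1 ∧ n ∈ p.2) := by
  by_contra hc
  push_neg at hc
  refine h (compat_of_no_witness hp hq ?_)
  intro n
  have := hc n
  tauto

lemma exists_ne_of_uncountable {α : Type*} {P : Set α} (h : ¬P.Countable) {p : α} (hp : p ∈ P) :
    ∃ q ∈ P, q ≠ p := by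
  by_contra hc
  push_neg at hc
  exact h (Set.Countable.mono (fun q hq => hc q hq : P ⊆ {p}) (Set.countable_singleton p))

lemma uncountable_of_mk {α : Type*} {P : Set α} {κ : Cardinal} (hκ : Cardinal.aleph0 < κ)
    (hmk : Cardinal.mk P = κ) : ¬P.Countable := by
  intro hc
  rw [← Set.countable_coe_iff, ← Cardinal.mk_le_aleph0_iff, hmk] at hc
  exact absurd hc (not_le.2 hκ)

lemma dist_condVec_eq_two {𝒜 : Set (Set ℕ)} {p q : Set ℕ × Set ℕ}
    (hp : SplitCond 𝒜 p) (hq : SplitCond 𝒜 q) (h : ¬Compat 𝒜 p q) :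
    ‖condVec p - condVec q‖ = 2 := by
  obtain ⟨n, hn⟩ := witness_of_incompat hp hq h
  have habs : |condVec p n - condVec q n| = 2 := by
    rcases hn with ⟨h1, h2⟩ | ⟨h1, h2⟩
    · have h3 : n ∉ p.2 := fun hh => (Set.eq_empty_iff_forall_notMem.1 hp.1 n) ⟨h1, hh⟩
      have h4 : n ∉ q.1 := fun hh => (Set.eq_empty_iff_forall_notMem.1 hq.1 n) ⟨hh, h2⟩
      rw [condVec_apply, condVec_apply]; simp [h1, h2, h3, h4]; norm_num
    · have h3 : n ∉ q.2 := fun hh => (Set.eq_empty_iff_forall_notMem.1 hq.1 n) ⟨h1, hh⟩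
      have h4 : n ∉ p.1 := fun hh => (Set.eq_empty_iff_forall_notMem.1 hp.1 n) ⟨hh, h2⟩
      rw [condVec_apply, condVec_apply]; simp [h1, h2, h3, h4]
      norm_num
  refine le_antisymm (norm_le_of_forall_abs (by norm_num) fun m => ?_) ?_
  · have : (condVec p - condVec q) m = condVec p m - condVec q m := by
      rw [lp.coeFn_sub]; rfl
    rw [this]
    calc |condVec p m - condVec q m| ≤ |condVec p m| + |condVec q m| := abs_sub _ _
    _ ≤ 1 + 1 := add_le_add (condVec_abs_le p m) (condVec_abs_le q m)
    _ = 2 := by norm_num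
  · have h5 : (condVec p - condVec q) n = condVec p n - condVec q n := by
      rw [lp.coeFn_sub]; rfl
    calc (2:ℝ) = |(condVec p - condVec q) n| := by rw [h5, habs]
    _ ≤ _ := abs_apply_le_norm _ n

lemma dir_1_to_2 {𝒜 : Set (Set ℕ)} (h𝒜 : ADFamily 𝒜) {κ : Cardinal} (hκ : Cardinal.aleph0 < κ)
    (h : ∃ P : Set (Set ℕ × Set ℕ), SplitAntichain 𝒜 P ∧ Cardinal.mk P = κ) :
    ∃ S : Set Linfty, S ⊆ sphereInf 𝒜 ∧ Cardinal.mk S = κ ∧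
      ∀ x ∈ S, ∀ y ∈ S, x ≠ y → ‖x - y‖ = 2 := by
  obtain ⟨P, ⟨hcond, hinc⟩, hmk⟩ := h
  have hPunc : ¬P.Countable := uncountable_of_mk hκ hmk
  have hdist : ∀ p ∈ P, ∀ q ∈ P, p ≠ q → ‖condVec p - condVec q‖ = 2 := fun p hp q hq hne =>
    dist_condVec_eq_two (hcond p hp) (hcond q hq) (hinc p hp q hq hne)
  have hinj : Set.InjOn condVec P := by
    intro p hp q hq heq
    by_contra hne
    have h2 := hdist p hp q hq hne
    rw [heq, sub_self, norm_zero] at h2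
    norm_num at h2
  refine ⟨condVec '' P, ?_, ?_, ?_⟩
  · rintro x ⟨p, hp, rfl⟩
    refine ⟨condVec_mem_XA h𝒜 (hcond p hp), ?_⟩
    obtain ⟨q, hq, hqp⟩ := exists_ne_of_uncountable hPunc hp
    obtain ⟨n, hn⟩ := witness_of_incompat (hcond p hp) (hcond q hq)
      (hinc p hp q hq (Ne.symm hqp))
    apply condVec_norm_one (hcond p hp).1
    rcases hn with ⟨h1, -⟩ | ⟨-, h2⟩
    · exact ⟨n, Or.inl h1⟩
    · exact ⟨n, Or.inr h2⟩
  · rw [Cardinal.mk_image_eq_of_injOn _ _ hinj, hmk]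
  · rintro x ⟨p, hp, rfl⟩ y ⟨q, hq, rfl⟩ hne
    exact hdist p hp q hq (fun hh => hne (hh ▸ rfl))

/-- Representation of elements of the span. -/
lemma span_rep {𝒜 : Set (Set ℕ)} {y : Linfty} (hy : y ∈ spanXA 𝒜) :
    ∃ (c : Linfty) (k : ℕ) (g : Fin k → Set ℕ) (f : Fin k → ℝ), c ∈ c0Set ∧ (∀ i, g i ∈ 𝒜) ∧
      ∀ n, y n = c n + ∑ i, f i * (if n ∈ g i then 1 else 0) := by
  rw [spanXA, Submodule.span_union] at hy
  obtain ⟨c, hc, z, hz, rfl⟩ := Submodule.mem_sup.1 hy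
  have hc' : c ∈ c0Set := by
    have : Submodule.span ℝ c0Set = c0Sub := Submodule.span_eq c0Sub
    rw [this] at hc; exact hc
  obtain ⟨k, f, g', hsum⟩ := Submodule.mem_span_set'.1 hz
  have hch : ∀ i, ∃ A, A ∈ 𝒜 ∧ indicatorLinfty A = (g' i : Linfty) := fun i => (g' i).2
  choose g hg𝒜 hgind using hch
  refine ⟨c, k, g, f, hc', hg𝒜, fun n => ?_⟩
  have h1 : (c + z) n = c n + z n := by rw [lp.coeFn_add]; rfl
  rw [h1]
  congr 1
  rw [← hsum]
  have h2 : (⇑(∑ i, f i • (g' i : Linfty)) : ℕ → ℝ) = ∑ i, ⇑(f i • (g' i : Linfty)) :=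
    lp.coeFn_sum _ _
  rw [h2, Finset.sum_apply]
  apply Finset.sum_congr rfl
  intro i _
  have h3 : ⇑(f i • (g' i : Linfty)) = f i • ⇑(g' i : Linfty) := lp.coeFn_smul _ _
  rw [h3, Pi.smul_apply, smul_eq_mul, ← hgind i, ind_apply]

/-- The filter of large elements of `A`. -/
def FA (A : Set ℕ) : Filter ℕ := atTop ⊓ Filter.principal A

lemma FA_neBot {A : Set ℕ} (h : A.Infinite) : (FA A).NeBot := by
  rw [FA, Filter.inf_principal_neBot_iff]
  intro U hU
  rw [mem_atTop_sets] at hU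
  obtain ⟨a, ha⟩ := hU
  obtain ⟨b, hb, hab⟩ := h.exists_gt a
  exact ⟨b, ha b hab.le, hb⟩

lemma eventually_mem_FA (A : Set ℕ) : ∀ᶠ n in FA A, n ∈ A :=
  Filter.eventually_inf_principal.2 (Filter.Eventually.of_forall fun _ h => h)

lemma eventually_notmem_FA {A B : Set ℕ} (h : (A ∩ B).Finite) : ∀ᶠ n in FA A, n ∉ B := by
  apply Filter.eventually_inf_principal.2
  have h1 : ∀ᶠ n in atTop, n ∉ A ∩ B := by
    rw [← Nat.cofinite_eq_atTop]; exact h.eventually_cofinite_notMem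
  exact h1.mono fun n hn hA hB => hn ⟨hA, hB⟩

lemma finite_of_eventually_FA {A : Set ℕ} {P : ℕ → Prop} (h : ∀ᶠ n in FA A, P n) :
    {n | n ∈ A ∧ ¬P n}.Finite := by
  rw [FA, Filter.eventually_inf_principal] at h
  obtain ⟨m, hm⟩ := eventually_atTop.1 h
  apply (Set.finite_Iio m).subset
  rintro n ⟨hnA, hnP⟩
  by_contra hlt
  exact hnP (hm n (not_lt.1 hlt) hnA)

lemma tendsto_FA_of_c0 {c : Linfty} (hc : c ∈ c0Set) (A : Set ℕ) :
    Tendsto (fun n => c n) (FA A) (nhds 0) :=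
  hc.mono_left inf_le_left

lemma rep_tendsto {𝒜 : Set (Set ℕ)} (h𝒜 : ADFamily 𝒜) {A : Set ℕ} (hA : A ∈ 𝒜)
    {c : Linfty} {k : ℕ} {g : Fin k → Set ℕ} (f : Fin k → ℝ) (hc : c ∈ c0Set)
    (hg : ∀ i, g i ∈ 𝒜) :
    Tendsto (fun n => c n + ∑ i, f i * (if n ∈ g i then 1 else 0)) (FA A)
      (nhds (0 + ∑ i, if g i = A then f i else 0)) := by
  apply (tendsto_FA_of_c0 hc A).add
  apply tendsto_finset_sum
  intro i _
  by_cases hgi : g i = A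
  · subst hgi
    rw [if_pos rfl]
    apply tendsto_const_nhds.congr'
    exact (eventually_mem_FA (g i)).mono fun n hn => by simp [hn]
  · rw [if_neg hgi]
    apply tendsto_const_nhds.congr'
    have hfin : (A ∩ g i).Finite := h𝒜.2.2 A hA (g i) (hg i) (fun h => hgi h.symm)
    exact (eventually_notmem_FA hfin).mono fun n hn => by simp [hn]

lemma approx {𝒜 : Set (Set ℕ)} {x : Linfty} (hx : x ∈ XA 𝒜) {δ : ℝ} (hδ : 0 < δ) :
    ∃ y ∈ spanXA 𝒜, ‖x - y‖ < δ := by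
  have h1 : x ∈ closure (spanXA 𝒜 : Set Linfty) := by
    have h2 : (XA 𝒜 : Set Linfty) = closure (spanXA 𝒜 : Set Linfty) :=
      Submodule.topologicalClosure_coe _
    rw [← h2]; exact hx
  obtain ⟨y, hy, hxy⟩ := Metric.mem_closure_iff.1 h1 δ hδ
  exact ⟨y, hy, by rwa [dist_eq_norm] at hxy⟩

lemma abs_apply_sub_le {x y : Linfty} (n : ℕ) : |x n - y n| ≤ ‖x - y‖ := by
  have h : (x - y) n = x n - y n := by rw [lp.coeFn_sub]; rfl
  rw [← h]; exact abs_apply_le_norm _ n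

lemma XA_exists_tendsto {𝒜 : Set (Set ℕ)} (h𝒜 : ADFamily 𝒜) {x : Linfty} (hx : x ∈ XA 𝒜)
    {A : Set ℕ} (hA : A ∈ 𝒜) :
    ∃ l, Tendsto (fun n => x n) (FA A) (nhds l) := by
  haveI : (FA A).NeBot := FA_neBot (h𝒜.2.1 A hA)
  have hcauchy : Cauchy (Filter.map (fun n => x n) (FA A)) := by
    refine Metric.cauchy_iff.2 ⟨Filter.map_neBot, fun ε hε => ?_⟩
    obtain ⟨y, hy, hxy⟩ := approx hx (show (0:ℝ) < ε/5 by linarith)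
    obtain ⟨c, k, g, f, hc, hg, hrep⟩ := span_rep hy
    have hyt : Tendsto (fun n => y n) (FA A) (nhds (0 + ∑ i, if g i = A then f i else 0)) :=
      (rep_tendsto h𝒜 hA f hc hg).congr (fun n => (hrep n).symm)
    set l := 0 + ∑ i, if g i = A then f i else 0
    have hev : ∀ᶠ n in FA A, |y n - l| < ε/5 := by
      have := Metric.tendsto_nhds.1 hyt (ε/5) (by linarith)
      exact this.mono fun n hn => by rwa [Real.dist_eq] at hn
    refine ⟨(fun n => x n) '' {n | |y n - l| < ε/5}, ?_, ?_⟩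
    · exact Filter.image_mem_map hev
    · rintro a ⟨n, hn, rfl⟩ b ⟨m, hm, rfl⟩
      have h1 := abs_apply_sub_le (x := x) (y := y) n
      have h2 := abs_apply_sub_le (x := x) (y := y) m
      have h3 : |x n - y n| < ε/5 := lt_of_le_of_lt h1 hxy
      have h4 : |x m - y m| < ε/5 := lt_of_le_of_lt h2 hxy
      rw [Real.dist_eq]
      have e1 := abs_sub_abs_le_abs_sub (x n) (y n)
      calc |x n - x m| = |(x n - y n) + (y n - l) + (l - y m) + (y m - x m)| := by ring_nf
      _ ≤ |(x n - y n) + (y n - l) + (l - y m)| + |y m - x m| := abs_add_le _ _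
      _ ≤ |(x n - y n) + (y n - l)| + |l - y m| + |y m - x m| := by
          gcongr; exact abs_add_le _ _
      _ ≤ |x n - y n| + |y n - l| + |l - y m| + |y m - x m| := by
          gcongr; exact abs_add_le _ _
      _ < ε := by
          simp only [Set.mem_setOf_eq] at hn hm
          have e2 : |l - y m| < ε/5 := by rw [abs_sub_comm]; exact hm
          have e3 : |y m - x m| < ε/5 := by rw [abs_sub_comm]; exact h4
          linarith
  obtain ⟨l, hl⟩ := CompleteSpace.complete hcauchy
  exact ⟨l, hl⟩

/-- The limit of `x` along `A`. -/
def lam (x : Linfty) (A : Set ℕ) : ℝ := Filter.limsup (fun n => x n) (FA A)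

lemma XA_tendsto_lam {𝒜 : Set (Set ℕ)} (h𝒜 : ADFamily 𝒜) {x : Linfty} (hx : x ∈ XA 𝒜)
    {A : Set ℕ} (hA : A ∈ 𝒜) :
    Tendsto (fun n => x n) (FA A) (nhds (lam x A)) := by
  haveI : (FA A).NeBot := FA_neBot (h𝒜.2.1 A hA)
  obtain ⟨l, hl⟩ := XA_exists_tendsto h𝒜 hx hA
  have : lam x A = l := hl.limsup_eq
  rw [this]; exact hl

lemma lam_neg {𝒜 : Set (Set ℕ)} (h𝒜 : ADFamily 𝒜) {x : Linfty} (hx : x ∈ XA 𝒜)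
    {A : Set ℕ} (hA : A ∈ 𝒜) : lam (-x) A = -lam x A := by
  haveI : (FA A).NeBot := FA_neBot (h𝒜.2.1 A hA)
  have h1 : Tendsto (fun n => (-x) n) (FA A) (nhds (-lam x A)) := by
    have := (XA_tendsto_lam h𝒜 hx hA).neg
    apply this.congr
    intro n
    rw [lp.coeFn_neg]; rfl
  exact h1.limsup_eq

lemma lam_finite {𝒜 : Set (Set ℕ)} (h𝒜 : ADFamily 𝒜) {x : Linfty} (hx : x ∈ XA 𝒜)
    {s : ℝ} (hs : 0 < s) : {A | A ∈ 𝒜 ∧ s ≤ |lam x A|}.Finite := by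
  obtain ⟨y, hy, hxy⟩ := approx hx (half_pos hs)
  obtain ⟨c, k, g, f, hc, hg, hrep⟩ := span_rep hy
  apply (Set.finite_range g).subset
  rintro A ⟨hA𝒜, hsl⟩
  by_contra hAr
  have hgi : ∀ i, g i ≠ A := fun i h => hAr ⟨i, h⟩
  have h0 : Tendsto (fun n => y n) (FA A) (nhds 0) := by
    have h1 := (rep_tendsto h𝒜 hA𝒜 f hc hg).congr (fun n => (hrep n).symm)
    have h2 : (0 : ℝ) + ∑ i, (if g i = A then f i else 0) = 0 := by
      rw [Finset.sum_eq_zero (fun i _ => if_neg (hgi i)), add_zero]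
    rwa [h2] at h1
  have hxl := XA_tendsto_lam h𝒜 hx hA𝒜
  haveI : (FA A).NeBot := FA_neBot (h𝒜.2.1 A hA𝒜)
  have h3 : Tendsto (fun n => |x n - y n|) (FA A) (nhds |lam x A - 0|) := (hxl.sub h0).abs
  have h4 : |lam x A - 0| ≤ s/2 := by
    apply le_of_tendsto h3
    exact Filter.Eventually.of_forall fun n => le_trans (abs_apply_sub_le n) hxy.le
  rw [sub_zero] at h4
  linarith

lemma exists_good_t {𝒜 : Set (Set ℕ)} (h𝒜 : ADFamily 𝒜) {x : Linfty} (hx : x ∈ XA 𝒜)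
    {ε : ℝ} (hε : 0 < ε) :
    ∃ t, 0 < t ∧ t < ε ∧ ∀ A ∈ 𝒜, lam x A ≠ t ∧ lam x A ≠ -t := by
  set V : Set ℝ := {r | 0 < r ∧ ∃ A ∈ 𝒜, |lam x A| = r} with hV
  have hVc : V.Countable := by
    have hsub : V ⊆ ⋃ (m : ℕ), (fun A => |lam x A|) ''
        {A | A ∈ 𝒜 ∧ 1/((m:ℝ)+1) ≤ |lam x A|} := by
      rintro r ⟨hr, A, hA, rfl⟩
      obtain ⟨m, hm⟩ := exists_nat_one_div_lt hr
      exact Set.mem_iUnion.2 ⟨m, Set.mem_image_of_mem _ ⟨hA, hm.le⟩⟩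
    refine (Set.countable_iUnion fun m => ?_).mono hsub
    exact ((lam_finite h𝒜 hx (by positivity)).image _).countable
  have hIoo : ¬(Set.Ioo (0:ℝ) ε).Countable := by
    intro h
    rw [← Set.countable_coe_iff, ← Cardinal.mk_le_aleph0_iff, Cardinal.mk_Ioo_real hε] at h
    exact absurd h (not_le.2 Cardinal.aleph0_lt_continuum)
  obtain ⟨t, htI, htV⟩ : ∃ t ∈ Set.Ioo (0:ℝ) ε, t ∉ V := by
    by_contra hc
    push_neg at hc
    exact hIoo (hVc.mono hc)
  refine ⟨t, htI.1, htI.2, fun A hA => ⟨?_, ?_⟩⟩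
  · intro h; exact htV ⟨htI.1, A, hA, by rw [h, abs_of_pos htI.1]⟩
  · intro h; exact htV ⟨htI.1, A, hA, by rw [h, abs_neg, abs_of_pos htI.1]⟩

lemma upper_set_eqStar {𝒜 : Set (Set ℕ)} (h𝒜 : ADFamily 𝒜) {x : Linfty} (hx : x ∈ XA 𝒜)
    {t : ℝ} (ht : 0 < t) (hgood : ∀ A ∈ 𝒜, lam x A ≠ t) :
    ∃ F : Finset (Set ℕ), ↑F ⊆ 𝒜 ∧ eqStar {n | t < x n} (⋃ A ∈ F, A) := by
  classical
  have hfin' : {A | A ∈ 𝒜 ∧ t < lam x A}.Finite :=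
    (lam_finite h𝒜 hx ht).subset fun A ⟨h1, h2⟩ => ⟨h1, le_trans h2.le (le_abs_self _)⟩
  set F := hfin'.toFinset with hF
  have hFmem : ∀ A, A ∈ F ↔ A ∈ 𝒜 ∧ t < lam x A := fun A => hfin'.mem_toFinset
  set D := {n | t < x n} with hD
  set U := ⋃ A ∈ F, A with hU
  refine ⟨F, fun A hA => ((hFmem A).1 ((Finset.mem_coe).1 hA)).1, ?_⟩
  have hUD : (U \ D).Finite := by
    have : U \ D ⊆ ⋃ A ∈ F, (A \ D) := by
      rw [hU]
      intro n hn
      obtain ⟨hnU, hnD⟩ := hn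
      obtain ⟨A, hA, hnA⟩ := Set.mem_iUnion₂.1 hnU
      exact Set.mem_iUnion₂.2 ⟨A, hA, hnA, hnD⟩
    apply Set.Finite.subset ?_ this
    apply Set.Finite.biUnion F.finite_toSet
    intro A hAF
    obtain ⟨hA𝒜, hlt⟩ := (hFmem A).1 hAF
    have hev : ∀ᶠ n in FA A, t < x n :=
      (tendsto_order.1 (XA_tendsto_lam h𝒜 hx hA𝒜)).1 t hlt
    have := finite_of_eventually_FA hev
    apply this.subset
    rintro n ⟨hnA, hnD⟩
    exact ⟨hnA, hnD⟩
  have hDU : (D \ U).Finite := by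
    by_contra hinf
    have hNA : ∀ A ∈ 𝒜, ((D \ U) ∩ A).Finite := by
      intro A hA
      rcases lt_or_gt_of_ne (hgood A hA) with hlt | hgt
      · have hev : ∀ᶠ n in FA A, x n < t :=
          (tendsto_order.1 (XA_tendsto_lam h𝒜 hx hA)).2 t hlt
        apply (finite_of_eventually_FA hev).subset
        rintro n ⟨⟨hnD, _⟩, hnA⟩
        exact ⟨hnA, not_lt.2 hnD.le⟩
      · have hAF : A ∈ F := (hFmem A).2 ⟨hA, hgt⟩
        have hAU : A ⊆ U := fun n hn => Set.mem_iUnion₂.2 ⟨A, hAF, hn⟩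
        apply Set.Finite.subset (Set.finite_empty)
        rintro n ⟨⟨_, hnU⟩, hnA⟩
        exact hnU (hAU hnA)
    obtain ⟨y, hy, hxy⟩ := approx hx (by positivity : (0:ℝ) < t/3)
    obtain ⟨c, k, g, f, hc, hg, hrep⟩ := span_rep hy
    set N' := (D \ U) \ ⋃ i, g i with hN'def
    have hN1 : (D \ U) ⊆ N' ∪ ⋃ i, ((D \ U) ∩ g i) := by
      intro n hn
      by_cases hng : n ∈ ⋃ i, g i
      · obtain ⟨i, hi⟩ := Set.mem_iUnion.1 hng
        exact Or.inr (Set.mem_iUnion.2 ⟨i, hn, hi⟩)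
      · exact Or.inl ⟨hn, hng⟩
    have hN' : N'.Infinite := fun hfin2 =>
      hinf ((hfin2.union (Set.finite_iUnion fun i => hNA (g i) (hg i))).subset hN1)
    have hcsmall : ∀ᶠ n in atTop, |c n| < t/3 := by
      have := Metric.tendsto_nhds.1 hc (t/3) (by positivity)
      exact this.mono fun n hn => by rwa [Real.dist_eq, sub_zero] at hn
    obtain ⟨m, hm⟩ := eventually_atTop.1 hcsmall
    obtain ⟨n, hnN', hmn⟩ := hN'.exists_gt m
    have h1 : t < x n := hnN'.1.1
    have h2 : y n = c n := by
      rw [hrep n]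
      have hz : ∀ i ∈ Finset.univ, f i * (if n ∈ g i then (1:ℝ) else 0) = 0 := fun i _ => by
        rw [if_neg (fun h => hnN'.2 (Set.mem_iUnion.2 ⟨i, h⟩)), mul_zero]
      rw [Finset.sum_eq_zero hz, add_zero]
    have h3 : |x n - y n| ≤ t/3 := le_trans (abs_apply_sub_le n) hxy.le
    have h4 : |c n| < t/3 := hm n hmn.le
    have h5 : x n ≤ |x n - y n| + |c n| := by
      rw [← h2]
      calc x n = (x n - y n) + y n := by ring
      _ ≤ |x n - y n| + |y n| := add_le_add (le_abs_self _) (le_abs_self _)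
    linarith
  show (symmDiff D U).Finite
  rw [Set.symmDiff_def]
  exact hDU.union hUD

lemma cond_of_point {𝒜 : Set (Set ℕ)} (h𝒜 : ADFamily 𝒜) {x : Linfty} (hx : x ∈ XA 𝒜)
    {t : ℝ} (ht : 0 < t) (hgood : ∀ A ∈ 𝒜, lam x A ≠ t ∧ lam x A ≠ -t) :
    SplitCond 𝒜 ({n | t < x n}, {n | x n < -t}) := by
  constructor
  · ext n
    simp only [Set.mem_inter_iff, Set.mem_setOf_eq, Set.mem_empty_iff_false, iff_false]
    rintro ⟨h1, h2⟩
    linarith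
  · obtain ⟨a, ha, h1⟩ := upper_set_eqStar h𝒜 hx ht (fun A hA => (hgood A hA).1)
    have hnx : (-x : Linfty) ∈ XA 𝒜 := Submodule.neg_mem _ hx
    obtain ⟨b, hb, h2⟩ := upper_set_eqStar h𝒜 hnx ht (fun A hA => by
      rw [lam_neg h𝒜 hx hA]
      intro hc
      exact (hgood A hA).2 (by linarith))
    have hset : {n | t < (-x : Linfty) n} = {n | x n < -t} := by
      ext n
      simp only [Set.mem_setOf_eq, lp.coeFn_neg, Pi.neg_apply]
      constructor <;> intro h <;> linarith
    rw [hset] at h2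
    exact ⟨a, b, ha, hb, h1, h2⟩

lemma dir_4_to_1 {𝒜 : Set (Set ℕ)} (h𝒜 : ADFamily 𝒜) {κ : Cardinal}
    (h : ∃ ε : ℝ, 0 < ε ∧ ∃ S : Set Linfty, S ⊆ sphereInf 𝒜 ∧ Cardinal.mk S = κ ∧
      ∀ x ∈ S, ∀ y ∈ S, x ≠ y → 1 + ε ≤ ‖x - y‖) :
    ∃ P : Set (Set ℕ × Set ℕ), SplitAntichain 𝒜 P ∧ Cardinal.mk P = κ := by
  obtain ⟨ε, hε, S, hS, hmk, hsep⟩ := h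
  have hchoice : ∀ x : S, ∃ t, 0 < t ∧ t < ε/2 ∧
      ∀ A ∈ 𝒜, lam (x : Linfty) A ≠ t ∧ lam (x : Linfty) A ≠ -t :=
    fun x => exists_good_t h𝒜 (hS x.2).1 (by linarith)
  choose T hT0 hTε hTgood using hchoice
  set Φ : S → Set ℕ × Set ℕ :=
    fun x => ({n | T x < (x : Linfty) n}, {n | (x : Linfty) n < -(T x)}) with hΦ
  have hΦcond : ∀ x, SplitCond 𝒜 (Φ x) :=
    fun x => cond_of_point h𝒜 (hS x.2).1 (hT0 x) (hTgood x)
  have hwit : ∀ x y : S, x ≠ y →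
      ∃ n, (n ∈ (Φ x).1 ∧ n ∈ (Φ y).2) ∨ (n ∈ (Φ y).1 ∧ n ∈ (Φ x).2) := by
    intro x y hne
    have hxyne : (x : Linfty) ≠ (y : Linfty) := fun hh => hne (Subtype.ext hh)
    have hd : 1 + ε ≤ ‖(x : Linfty) - y‖ := hsep _ x.2 _ y.2 hxyne
    obtain ⟨n, hn⟩ : ∃ n, 1 + ε/2 < |(x : Linfty) n - (y : Linfty) n| := by
      by_contra hc
      push_neg at hc
      have : ‖(x : Linfty) - (y : Linfty)‖ ≤ 1 + ε/2 := by
        apply norm_le_of_forall_abs (by linarith)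
        intro n
        have hcoe : ((x : Linfty) - (y : Linfty)) n = (x : Linfty) n - (y : Linfty) n := by
          rw [lp.coeFn_sub]; rfl
        rw [hcoe]; exact hc n
      linarith
    have hx1 : |(x : Linfty) n| ≤ 1 := by
      have := abs_apply_le_norm (x : Linfty) n
      rwa [(hS x.2).2] at this
    have hy1 : |(y : Linfty) n| ≤ 1 := by
      have := abs_apply_le_norm (y : Linfty) n
      rwa [(hS y.2).2] at this
    rw [abs_le] at hx1 hy1
    rcases le_or_gt ((x : Linfty) n - (y : Linfty) n) 0 with hsgn | hsgn
    · rw [abs_of_nonpos hsgn] at hn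
      refine ⟨n, Or.inr ⟨?_, ?_⟩⟩
      · show T y < (y : Linfty) n
        have := hTε y
        linarith [hx1.1]
      · show (x : Linfty) n < -(T x)
        have := hTε x
        linarith [hy1.2]
    · rw [abs_of_pos hsgn] at hn
      refine ⟨n, Or.inl ⟨?_, ?_⟩⟩
      · show T x < (x : Linfty) n
        have := hTε x
        linarith [hy1.1]
      · show (y : Linfty) n < -(T y)
        have := hTε y
        linarith [hx1.2]
  have hinj : Function.Injective Φ := by
    intro x y hxy
    by_contra hne
    obtain ⟨n, hn⟩ := hwit x y hne
    rcases hn with ⟨h1, h2⟩ | ⟨h1, h2⟩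
    · rw [hxy] at h1
      exact (Set.eq_empty_iff_forall_notMem.1 (hΦcond y).1 n) ⟨h1, h2⟩
    · rw [hxy] at h2
      exact (Set.eq_empty_iff_forall_notMem.1 (hΦcond y).1 n) ⟨h1, h2⟩
  refine ⟨Set.range Φ, ⟨?_, ?_⟩, ?_⟩
  · rintro p ⟨x, rfl⟩
    exact hΦcond x
  · rintro p ⟨x, rfl⟩ q ⟨y, rfl⟩ hpq ⟨r, hr, hrp, hrq⟩
    have hne : x ≠ y := fun hh => hpq (hh ▸ rfl)
    obtain ⟨n, hn⟩ := hwit x y hne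
    rcases hn with ⟨h1, h2⟩ | ⟨h1, h2⟩
    · exact (Set.eq_empty_iff_forall_notMem.1 hr.1 n) ⟨hrp.1 h1, hrq.2 h2⟩
    · exact (Set.eq_empty_iff_forall_notMem.1 hr.1 n) ⟨hrq.1 h1, hrp.2 h2⟩
  · rw [Cardinal.mk_range_eq _ hinj, hmk]

end S14

/-- for an a.d.-family `𝒜` and an uncountable cardinal `κ`, the existence
of an antichain of `ℙ_𝒜` of cardinality `κ` is equivalent to the existence in the unit
sphere of `(X_𝒜, ‖·‖∞)` of a `2`-equilateral set of cardinality `κ`, of an `r`-equilateral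
set of cardinality `κ` for some `r > 1`, and of a `(1+ε)`-separated set of cardinality `κ`
for some `ε > 0`. -/
theorem statement14 (𝒜 : Set (Set ℕ)) (h𝒜 : ADFamily 𝒜) (κ : Cardinal.{0})
    (hκ : Cardinal.aleph0 < κ) :
    ((∃ P : Set (Set ℕ × Set ℕ), SplitAntichain 𝒜 P ∧ Cardinal.mk P = κ) ↔
      (∃ S : Set Linfty, S ⊆ sphereInf 𝒜 ∧ Cardinal.mk S = κ ∧
        ∀ x ∈ S, ∀ y ∈ S, x ≠ y → ‖x - y‖ = 2)) ∧
    ((∃ P : Set (Set ℕ × Set ℕ), SplitAntichain 𝒜 P ∧ Cardinal.mk P = κ) ↔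
      (∃ r : ℝ, 1 < r ∧ ∃ S : Set Linfty, S ⊆ sphereInf 𝒜 ∧ Cardinal.mk S = κ ∧
        ∀ x ∈ S, ∀ y ∈ S, x ≠ y → ‖x - y‖ = r)) ∧
    ((∃ P : Set (Set ℕ × Set ℕ), SplitAntichain 𝒜 P ∧ Cardinal.mk P = κ) ↔
      (∃ ε : ℝ, 0 < ε ∧ ∃ S : Set Linfty, S ⊆ sphereInf 𝒜 ∧ Cardinal.mk S = κ ∧
        ∀ x ∈ S, ∀ y ∈ S, x ≠ y → 1 + ε ≤ ‖x - y‖)) := by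
  have h12 := fun h => dir_1_to_2 h𝒜 hκ h
  have h41 := fun h => dir_4_to_1 h𝒜 (κ := κ) h
  have h24 : (∃ S : Set Linfty, S ⊆ sphereInf 𝒜 ∧ Cardinal.mk S = κ ∧
      ∀ x ∈ S, ∀ y ∈ S, x ≠ y → ‖x - y‖ = 2) →
      (∃ ε : ℝ, 0 < ε ∧ ∃ S : Set Linfty, S ⊆ sphereInf 𝒜 ∧ Cardinal.mk S = κ ∧
        ∀ x ∈ S, ∀ y ∈ S, x ≠ y → 1 + ε ≤ ‖x - y‖) := by
    rintro ⟨S, h1, h2, h3⟩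
    exact ⟨1, one_pos, S, h1, h2, fun x hx y hy hne => by
      rw [h3 x hx y hy hne]; norm_num⟩
  have h34 : (∃ r : ℝ, 1 < r ∧ ∃ S : Set Linfty, S ⊆ sphereInf 𝒜 ∧ Cardinal.mk S = κ ∧
      ∀ x ∈ S, ∀ y ∈ S, x ≠ y → ‖x - y‖ = r) →
      (∃ ε : ℝ, 0 < ε ∧ ∃ S : Set Linfty, S ⊆ sphereInf 𝒜 ∧ Cardinal.mk S = κ ∧
        ∀ x ∈ S, ∀ y ∈ S, x ≠ y → 1 + ε ≤ ‖x - y‖) := by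
    rintro ⟨r, hr, S, h1, h2, h3⟩
    exact ⟨r - 1, by linarith, S, h1, h2, fun x hx y hy hne => by
      rw [h3 x hx y hy hne]; linarith⟩
  have h13 : (∃ P : Set (Set ℕ × Set ℕ), SplitAntichain 𝒜 P ∧ Cardinal.mk P = κ) →
      (∃ r : ℝ, 1 < r ∧ ∃ S : Set Linfty, S ⊆ sphereInf 𝒜 ∧ Cardinal.mk S = κ ∧
        ∀ x ∈ S, ∀ y ∈ S, x ≠ y → ‖x - y‖ = r) := by
    intro h
    obtain ⟨S, h1, h2, h3⟩ := h12 h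
    exact ⟨2, one_lt_two, S, h1, h2, h3⟩
  exact ⟨⟨h12, fun h => h41 (h24 h)⟩, ⟨h13, fun h => h41 (h34 h)⟩,
    ⟨fun h => h24 (h12 h), h41⟩⟩
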